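/- Let A and B be m×n binary matrices and let k > 1 be an integer. If the set R^k(A,B) of row patterns of M^k(A,B) is totally ordered by the relation ≤, then the graph G^k(A,B) is word-representable. -/

import Mathlib

/-- A word `w` over alphabet `V` represents the graph `G`: every vertex occurs in `w`,
and two distinct vertices are adjacent iff their letters alternate in `w`. -/
def WordRepresents {V : Type*} [DecidableEq V] (w : List V) (G : SimpleGraph V) : Prop :=
  (∀ v : V, v ∈ w) ∧
  ∀ x y : V, x ≠ y →
    (G.Adj x y ↔ (w.filter (fun z => z == x || z == y)).Chain' (· ≠ ·))

/-- A graph is word-representable if some word represents it. -/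
def WordRepresentable {V : Type*} [DecidableEq V] (G : SimpleGraph V) : Prop :=
  ∃ w : List V, WordRepresents w G

/-- The split graph `G(M)` of an `m × n` binary matrix `M`: vertices `Sum.inl j`
(`j : Fin n`) form a clique, vertices `Sum.inr i` (`i : Fin m`) form an independent set,
and `Sum.inr i` is adjacent to `Sum.inl j` iff `M i j = true`. -/
def splitGraph {m n : ℕ} (M : Fin m → Fin n → Bool) : SimpleGraph (Fin n ⊕ Fin m) :=
  SimpleGraph.fromRel (fun x y =>
    match x, y with
    | Sum.inl _, Sum.inl _ => True
    | Sum.inl j, Sum.inr i => M i j = true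
    | _, _ => False)

/-- `morphIter A B k` is the matrix `M^k(A,B)`, obtained from the `1 × 1` matrix `[0]`
by `k` iterations of the 2-dimensional morphism replacing `0` by the block `A`
and `1` by the block `B`. -/
def morphIter {m n : ℕ} (A B : Fin m → Fin n → Bool) :
    (k : ℕ) → Fin (m ^ k) → Fin (n ^ k) → Bool
  | 0, _, _ => false
  | k + 1, i, j =>
    have hm : 0 < m := Nat.pos_of_ne_zero (fun h => by
      have := i.isLt; simp [h] at this)
    have hn : 0 < n := Nat.pos_of_ne_zero (fun h => by
      have := j.isLt; simp [h] at this)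
    have hR : i.val / m < m ^ k :=
      (Nat.div_lt_iff_lt_mul hm).2 (by rw [← pow_succ]; exact i.isLt)
    have hC : j.val / n < n ^ k :=
      (Nat.div_lt_iff_lt_mul hn).2 (by rw [← pow_succ]; exact j.isLt)
    if morphIter A B k ⟨i.val / m, hR⟩ ⟨j.val / n, hC⟩ then
      B ⟨i.val % m, Nat.mod_lt _ hm⟩ ⟨j.val % n, Nat.mod_lt _ hn⟩
    else
      A ⟨i.val % m, Nat.mod_lt _ hm⟩ ⟨j.val % n, Nat.mod_lt _ hn⟩

/-- `Gk A B k` is the split graph `G^k(A,B) = G(M^k(A,B))`. -/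
def Gk {m n : ℕ} (A B : Fin m → Fin n → Bool) (k : ℕ) :
    SimpleGraph (Fin (n ^ k) ⊕ Fin (m ^ k)) :=
  splitGraph (morphIter A B k)

namespace Stmt14Aux

open List

/-- filter of a nodup list by a predicate that holds exactly at `j` (among members). -/
lemma filter_single {α : Type*} [DecidableEq α] :
    ∀ (l : List α), l.Nodup → ∀ (j : α), j ∈ l → ∀ (pr : α → Bool),
      (∀ u ∈ l, (pr u = true ↔ u = j)) → l.filter pr = [j]
  | [], _, j, hj, _, _ => absurd hj (by simp)
  | a :: l, hl, j, hj, pr, hpr => by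
    rcases List.nodup_cons.mp hl with ⟨hal, hl'⟩
    by_cases haj : a = j
    · subst haj
      have hpa : pr a = true := (hpr a (by simp)).mpr rfl
      have : l.filter pr = [] := List.filter_eq_nil_iff.mpr (by
        intro u hu hpu
        exact hal (((hpr u (by simp [hu])).mp hpu) ▸ hu))
      simp [List.filter_cons, hpa, this]
    · have hpa : pr a = false := by
        cases hb : pr a
        · rfl
        · exact absurd ((hpr a (by simp)).mp hb) haj
      have hj' : j ∈ l := by
        rcases List.mem_cons.mp hj with h | h
        · exact absurd h.symm haj
        · exact h
      have := filter_single l hl' j hj' pr (fun u hu => hpr u (by simp [hu]))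
      simp [List.filter_cons, hpa, this]

/-- filter of a nodup list by a predicate that holds exactly at `j` or `j'`. -/
lemma filter_pair {α : Type*} [DecidableEq α] :
    ∀ (l : List α), l.Nodup → ∀ (j j' : α), j ≠ j' → j ∈ l → j' ∈ l → ∀ (pr : α → Bool),
      (∀ u ∈ l, (pr u = true ↔ (u = j ∨ u = j'))) →
      l.filter pr = [j, j'] ∨ l.filter pr = [j', j]
  | [], _, j, j', _, hj, _, _, _ => absurd hj (by simp)
  | a :: l, hl, j, j', hne, hj, hj', pr, hpr => by
    rcases List.nodup_cons.mp hl with ⟨hal, hl'⟩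
    by_cases haj : a = j
    · subst haj
      have hpa : pr a = true := (hpr a (by simp)).mpr (Or.inl rfl)
      have hj'' : j' ∈ l := by
        rcases List.mem_cons.mp hj' with h | h
        · exact absurd h.symm hne
        · exact h
      have : l.filter pr = [j'] := filter_single l hl' j' hj'' pr (by
        intro u hu
        rw [hpr u (by simp [hu])]
        constructor
        · rintro (rfl | h)
          · exact absurd hu hal
          · exact h
        · exact fun h => Or.inr h)
      left; simp [List.filter_cons, hpa, this]
    · by_cases haj' : a = j'
      · subst haj'
        have hpa : pr a = true := (hpr a (by simp)).mpr (Or.inr rfl)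
        have hj'' : j ∈ l := by
          rcases List.mem_cons.mp hj with h | h
          · exact absurd h.symm haj
          · exact h
        have : l.filter pr = [j] := filter_single l hl' j hj'' pr (by
          intro u hu
          rw [hpr u (by simp [hu])]
          constructor
          · rintro (h | rfl)
            · exact h
            · exact absurd hu hal
          · exact fun h => Or.inl h)
        right; simp [List.filter_cons, hpa, this]
      · have hpa : pr a = false := by
          cases hb : pr a
          · rfl
          · rcases (hpr a (by simp)).mp hb with h' | h'
            · exact absurd h' haj
            · exact absurd h' haj'
        have hjl : j ∈ l := by
          rcases List.mem_cons.mp hj with h | h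
          · exact absurd h.symm haj
          · exact h
        have hj'l : j' ∈ l := by
          rcases List.mem_cons.mp hj' with h | h
          · exact absurd h.symm haj'
          · exact h
        have := filter_pair l hl' j j' hne hjl hj'l pr (fun u hu => hpr u (by simp [hu]))
        rcases this with h | h
        · left; simp [List.filter_cons, hpa, h]
        · right; simp [List.filter_cons, hpa, h]

lemma flatMap_range_one {β : Type*} (g : ℕ → List β) :
    ∀ (N s : ℕ), s ≤ N → (∀ u, u ≤ N → u ≠ s → g u = []) →
      (List.range (N + 1)).flatMap g = g s
  | 0, s, hs, _ => by
    interval_cases s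
    simp [List.range_succ]
  | N + 1, s, hs, hg => by
    rw [List.range_succ, List.flatMap_append]
    by_cases h : s = N + 1
    · subst h
      have : (List.range (N + 1)).flatMap g = [] := List.flatMap_eq_nil_iff.mpr (by
        intro u hu
        have hu' := List.mem_range.mp hu
        exact hg u (by omega) (by omega))
      simp [this]
    · have hs' : s ≤ N := by omega
      rw [flatMap_range_one g N s hs' (fun u hu h' => hg u (by omega) h')]
      have : g (N + 1) = [] := hg (N + 1) le_rfl (by omega)
      simp [this]

lemma flatMap_range_pair {β : Type*} (g : ℕ → List β) :
    ∀ (N s t : ℕ), s < t → t ≤ N → (∀ u, u ≤ N → u ≠ s → u ≠ t → g u = []) →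
      (List.range (N + 1)).flatMap g = g s ++ g t
  | 0, s, t, hst, ht, _ => by omega
  | N + 1, s, t, hst, ht, hg => by
    rw [List.range_succ, List.flatMap_append]
    by_cases h : t = N + 1
    · subst h
      have : (List.range (N + 1)).flatMap g = g s := by
        apply flatMap_range_one g N s (by omega)
        intro u hu h'
        exact hg u (by omega) h' (by omega)
      rw [this]; simp
    · have ht' : t ≤ N := by omega
      rw [flatMap_range_pair g N s t hst ht' (fun u hu h1 h2 => hg u (by omega) h1 h2)]
      have : g (N + 1) = [] := hg (N + 1) le_rfl (by omega) (by omega)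
      simp [this]

lemma flatMap_revrange_one {β : Type*} (g : ℕ → List β) :
    ∀ (N s : ℕ), s ≤ N → (∀ u, u ≤ N → u ≠ s → g u = []) →
      (List.range (N + 1)).reverse.flatMap g = g s
  | 0, s, hs, _ => by
    interval_cases s
    simp [List.range_succ]
  | N + 1, s, hs, hg => by
    rw [List.range_succ, List.reverse_append]
    simp only [List.reverse_cons, List.reverse_nil, List.nil_append, List.singleton_append,
      List.flatMap_cons]
    by_cases h : s = N + 1
    · subst h
      have : (List.range (N + 1)).reverse.flatMap g = [] := List.flatMap_eq_nil_iff.mpr (by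
        intro u hu
        rw [List.mem_reverse] at hu
        exact hg u (by have := List.mem_range.mp hu; omega) (by have := List.mem_range.mp hu; omega))
      simp [this]
    · have hs' : s ≤ N := by omega
      rw [flatMap_revrange_one g N s hs' (fun u hu h' => hg u (by omega) h')]
      have : g (N + 1) = [] := hg (N + 1) le_rfl (by omega)
      simp [this]

lemma flatMap_revrange_pair {β : Type*} (g : ℕ → List β) :
    ∀ (N s t : ℕ), s < t → t ≤ N → (∀ u, u ≤ N → u ≠ s → u ≠ t → g u = []) →
      (List.range (N + 1)).reverse.flatMap g = g t ++ g s
  | 0, s, t, hst, ht, _ => by omega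
  | N + 1, s, t, hst, ht, hg => by
    rw [List.range_succ, List.reverse_append]
    simp only [List.reverse_cons, List.reverse_nil, List.nil_append, List.singleton_append,
      List.flatMap_cons]
    by_cases h : t = N + 1
    · subst h
      have : (List.range (N + 1)).reverse.flatMap g = g s := by
        apply flatMap_revrange_one g N s (by omega)
        intro u hu h'
        exact hg u (by omega) h' (by omega)
      rw [this]
    · have ht' : t ≤ N := by omega
      rw [flatMap_revrange_pair g N s t hst ht' (fun u hu h1 h2 => hg u (by omega) h1 h2)]
      have : g (N + 1) = [] := hg (N + 1) le_rfl (by omega) (by omega)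
      simp [this]

end Stmt14Aux

namespace Stmt14Aux

open List

def Ct (p q : ℕ) (a : Fin p → ℕ) (t : ℕ) : List (Fin p ⊕ Fin q) :=
  ((List.finRange p).filter (fun u => a u == t)).map Sum.inl

def It (p q : ℕ) (b : Fin q → ℕ) (t : ℕ) : List (Fin p ⊕ Fin q) :=
  ((List.finRange q).filter (fun u => b u == t)).map Sum.inr

def word (p q : ℕ) (a : Fin p → ℕ) (b : Fin q → ℕ) (N : ℕ) : List (Fin p ⊕ Fin q) :=
  ((List.range (N + 1)).flatMap (It p q b)) ++
  ((List.range (N + 1)).reverse.flatMap (fun t => Ct p q a t ++ (It p q b t).reverse)) ++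
  ((List.range (N + 1)).reverse.flatMap (Ct p q a))

lemma nodup_Ct (p q : ℕ) (a : Fin p → ℕ) (t : ℕ) : (Ct p q a t).Nodup :=
  ((List.nodup_finRange p).filter _).map Sum.inl_injective

lemma nodup_It (p q : ℕ) (b : Fin q → ℕ) (t : ℕ) : (It p q b t).Nodup :=
  ((List.nodup_finRange q).filter _).map Sum.inr_injective

lemma mem_Ct (p q : ℕ) (a : Fin p → ℕ) (j : Fin p) : (Sum.inl j : Fin p ⊕ Fin q) ∈ Ct p q a (a j) :=
  List.mem_map.mpr ⟨j, List.mem_filter.mpr ⟨List.mem_finRange j, by simp⟩, rfl⟩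

lemma mem_It (p q : ℕ) (b : Fin q → ℕ) (i : Fin q) : (Sum.inr i : Fin p ⊕ Fin q) ∈ It p q b (b i) :=
  List.mem_map.mpr ⟨i, List.mem_filter.mpr ⟨List.mem_finRange i, by simp⟩, rfl⟩

end Stmt14Aux

namespace Stmt14Aux


def Pred {α : Type*} [DecidableEq α] (x y : α) : α → Bool := fun z => z == x || z == y

lemma pred_iff {α : Type*} [DecidableEq α] (x y z : α) :
    Pred x y z = true ↔ (z = x ∨ z = y) := by simp [Pred]

lemma pred_comm {α : Type*} [DecidableEq α] (x y : α) : Pred x y = Pred y x :=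
  funext fun z => Bool.or_comm _ _

lemma rep_threshold {p q : ℕ} (a : Fin p → ℕ) (b : Fin q → ℕ)
    (G : SimpleGraph (Fin p ⊕ Fin q))
    (hKK : ∀ j j' : Fin p, j ≠ j' → G.Adj (Sum.inl j) (Sum.inl j'))
    (hII : ∀ i i' : Fin q, ¬G.Adj (Sum.inr i) (Sum.inr i'))
    (hKI : ∀ (j : Fin p) (i : Fin q), G.Adj (Sum.inl j) (Sum.inr i) ↔ b i ≤ a j) :
    WordRepresentable G := by
  classical
  set N := (Finset.univ.sup a) + (Finset.univ.sup b) with hN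
  have haN : ∀ j, a j ≤ N :=
    fun j => le_trans (Finset.le_sup (Finset.mem_univ j)) (Nat.le_add_right _ _)
  have hbN : ∀ i, b i ≤ N :=
    fun i => le_trans (Finset.le_sup (Finset.mem_univ i)) (Nat.le_add_left _ _)
  have mixed : ∀ (j : Fin p) (i : Fin q),
      (G.Adj (Sum.inl j) (Sum.inr i) ↔
        ((word p q a b N).filter (Pred (Sum.inl j) (Sum.inr i))).Chain' (· ≠ ·)) := by
    intro j i
    set P : Fin p ⊕ Fin q → Bool := Pred (Sum.inl j) (Sum.inr i) with hPdef
    have hCnil : ∀ t, t ≠ a j → (Ct p q a t).filter P = [] := by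
      intro t ht
      apply List.filter_eq_nil_iff.mpr
      intro z hz hPz
      rcases List.mem_map.mp hz with ⟨u, hu, rfl⟩
      rcases (pred_iff _ _ _).mp hPz with h1 | h1
      · have h2 : u = j := Sum.inl_injective h1
        subst h2
        have h3 : a u = t := by simpa using (List.mem_filter.mp hu).2
        exact ht h3.symm
      · exact Sum.inl_ne_inr h1
    have hInil : ∀ t, t ≠ b i → (It p q b t).filter P = [] := by
      intro t ht
      apply List.filter_eq_nil_iff.mpr
      intro z hz hPz
      rcases List.mem_map.mp hz with ⟨u, hu, rfl⟩
      rcases (pred_iff _ _ _).mp hPz with h1 | h1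
      · exact Sum.inr_ne_inl h1
      · have h2 : u = i := Sum.inr_injective h1
        subst h2
        have h3 : b u = t := by simpa using (List.mem_filter.mp hu).2
        exact ht h3.symm
    have hCj : (Ct p q a (a j)).filter P = [Sum.inl j] := by
      apply filter_single _ (nodup_Ct p q a (a j)) _ (mem_Ct p q a j)
      intro z hz
      rw [pred_iff]
      rcases List.mem_map.mp hz with ⟨u, hu, rfl⟩
      constructor
      · rintro (h1 | h1)
        · exact h1
        · exact absurd h1 (Sum.inl_ne_inr)
      · exact fun h1 => Or.inl h1
    have hIi : (It p q b (b i)).filter P = [Sum.inr i] := by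
      apply filter_single _ (nodup_It p q b (b i)) _ (mem_It p q b i)
      intro z hz
      rw [pred_iff]
      rcases List.mem_map.mp hz with ⟨u, hu, rfl⟩
      constructor
      · rintro (h1 | h1)
        · exact absurd h1 (Sum.inr_ne_inl)
        · exact h1
      · exact fun h1 => Or.inr h1
    have hS : (List.range (N + 1)).flatMap (fun t => (It p q b t).filter P) = [Sum.inr i] := by
      rw [flatMap_range_one (fun t => (It p q b t).filter P) N (b i) (hbN i)
        (fun u _ h' => hInil u h')]
      exact hIi
    have hD : (List.range (N + 1)).reverse.flatMap (fun t => (Ct p q a t).filter P)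
        = [Sum.inl j] := by
      rw [flatMap_revrange_one (fun t => (Ct p q a t).filter P) N (a j) (haN j)
        (fun u _ h' => hCnil u h')]
      exact hCj
    have hw0 : (word p q a b N).filter P
        = [Sum.inr i] ++ ((List.range (N + 1)).reverse.flatMap
            (fun t => (Ct p q a t).filter P ++ ((It p q b t).filter P).reverse))
          ++ [Sum.inl j] := by
      unfold word
      simp only [List.filter_append, List.filter_flatMap, List.filter_reverse]
      rw [hS, hD]
    rcases Nat.lt_trichotomy (b i) (a j) with hlt | heq | hgt
    · have hmidv : (List.range (N + 1)).reverse.flatMap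
          (fun t => (Ct p q a t).filter P ++ ((It p q b t).filter P).reverse)
          = [Sum.inl j, Sum.inr i] := by
        rw [flatMap_revrange_pair _ N (b i) (a j) hlt (haN j)
          (fun u _ h1 h2 => by rw [hCnil u h2, hInil u h1]; rfl)]
        rw [hCj, hIi, hInil (a j) (by omega), hCnil (b i) (by omega)]
        rfl
      rw [hw0, hmidv, hKI j i]
      simp [List.Chain', List.isChain_cons_cons]
      omega
    · have hmidv : (List.range (N + 1)).reverse.flatMap
          (fun t => (Ct p q a t).filter P ++ ((It p q b t).filter P).reverse)
          = [Sum.inl j, Sum.inr i] := by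
        rw [flatMap_revrange_one _ N (a j) (haN j)
          (fun u _ h1 => by rw [hCnil u h1, hInil u (by omega)]; rfl)]
        rw [hCj, ← heq, hIi]
        rfl
      rw [hw0, hmidv, hKI j i]
      simp [List.Chain', List.isChain_cons_cons]
      omega
    · have hmidv : (List.range (N + 1)).reverse.flatMap
          (fun t => (Ct p q a t).filter P ++ ((It p q b t).filter P).reverse)
          = [Sum.inr i, Sum.inl j] := by
        rw [flatMap_revrange_pair _ N (a j) (b i) hgt (hbN i)
          (fun u _ h1 h2 => by rw [hCnil u h1, hInil u h2]; rfl)]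
        rw [hCj, hIi, hInil (a j) (by omega), hCnil (b i) (by omega)]
        rfl
      rw [hw0, hmidv, hKI j i]
      simp [List.Chain', List.isChain_cons_cons]
      omega
  refine ⟨word p q a b N, ?_, ?_⟩
  · intro v
    rcases v with j | i
    · refine List.mem_append.mpr (Or.inr ?_)
      refine List.mem_flatMap.mpr ⟨a j, ?_, mem_Ct p q a j⟩
      rw [List.mem_reverse, List.mem_range]
      exact Nat.lt_succ_of_le (haN j)
    · refine List.mem_append.mpr (Or.inl (List.mem_append.mpr (Or.inl ?_)))
      refine List.mem_flatMap.mpr ⟨b i, ?_, mem_It p q b i⟩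
      rw [List.mem_range]
      exact Nat.lt_succ_of_le (hbN i)
  · intro x y hxy
    show G.Adj x y ↔ ((word p q a b N).filter (Pred x y)).Chain' (· ≠ ·)
    rcases x with j | i <;> rcases y with j' | i'
    · -- clique-clique
      have hne : j ≠ j' := fun hh => hxy (congrArg Sum.inl hh)
      set P : Fin p ⊕ Fin q → Bool := Pred (Sum.inl j) (Sum.inl j') with hPdef
      have hInil : ∀ t, (It p q b t).filter P = [] := by
        intro t
        apply List.filter_eq_nil_iff.mpr
        intro z hz hPz
        rcases List.mem_map.mp hz with ⟨u, hu, rfl⟩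
        rcases (pred_iff _ _ _).mp hPz with h1 | h1 <;> exact Sum.inr_ne_inl h1
      have hCnil : ∀ t, t ≠ a j → t ≠ a j' → (Ct p q a t).filter P = [] := by
        intro t ht ht'
        apply List.filter_eq_nil_iff.mpr
        intro z hz hPz
        rcases List.mem_map.mp hz with ⟨u, hu, rfl⟩
        have h3 : a u = t := by simpa using (List.mem_filter.mp hu).2
        rcases (pred_iff _ _ _).mp hPz with h1 | h1
        · exact ht ((Sum.inl_injective h1 ▸ h3 : a j = t)).symm
        · exact ht' ((Sum.inl_injective h1 ▸ h3 : a j' = t)).symm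
      have hSnil : (List.range (N + 1)).flatMap (fun t => (It p q b t).filter P) = [] :=
        List.flatMap_eq_nil_iff.mpr (fun t _ => hInil t)
      have hw0 : (word p q a b N).filter P
          = ((List.range (N + 1)).reverse.flatMap (fun t => (Ct p q a t).filter P))
            ++ ((List.range (N + 1)).reverse.flatMap (fun t => (Ct p q a t).filter P)) := by
        unfold word
        simp only [List.filter_append, List.filter_flatMap, List.filter_reverse]
        rw [hSnil]
        simp only [hInil, List.reverse_nil, List.append_nil, List.nil_append]
      have goalChain : ∀ u v : Fin p ⊕ Fin q, u ≠ v →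
          ([u, v] ++ [u, v]).Chain' (· ≠ ·) := by
        intro u v huv
        simp [List.Chain', List.isChain_cons_cons, huv, Ne.symm huv]
      rcases Nat.lt_trichotomy (a j) (a j') with hlt | heq | hgt
      · have hCj : (Ct p q a (a j)).filter P = [Sum.inl j] := by
          apply filter_single _ (nodup_Ct p q a (a j)) _ (mem_Ct p q a j)
          intro z hz
          rw [pred_iff]
          rcases List.mem_map.mp hz with ⟨u, hu, rfl⟩
          have h3 : a u = a j := by simpa using (List.mem_filter.mp hu).2
          constructor
          · rintro (h1 | h1)
            · exact h1
            · exact absurd (Sum.inl_injective h1 ▸ h3) (by omega)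
          · exact fun h1 => Or.inl h1
        have hCj' : (Ct p q a (a j')).filter P = [Sum.inl j'] := by
          apply filter_single _ (nodup_Ct p q a (a j')) _ (mem_Ct p q a j')
          intro z hz
          rw [pred_iff]
          rcases List.mem_map.mp hz with ⟨u, hu, rfl⟩
          have h3 : a u = a j' := by simpa using (List.mem_filter.mp hu).2
          constructor
          · rintro (h1 | h1)
            · exact absurd (Sum.inl_injective h1 ▸ h3) (by omega)
            · exact h1
          · exact fun h1 => Or.inr h1
        have hD : (List.range (N + 1)).reverse.flatMap (fun t => (Ct p q a t).filter P)
            = [Sum.inl j', Sum.inl j] := by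
          rw [flatMap_revrange_pair _ N (a j) (a j') hlt (haN j')
            (fun u _ h1 h2 => hCnil u h1 h2)]
          rw [hCj, hCj']
          rfl
        rw [hw0, hD]
        exact iff_of_true (hKK j j' hne)
          (goalChain _ _ (fun hh => hne (Sum.inl_injective hh).symm))
      · have hpair := filter_pair (Ct p q a (a j)) (nodup_Ct p q a (a j))
          (Sum.inl j) (Sum.inl j' : Fin p ⊕ Fin q)
          (fun hh => hne (Sum.inl_injective hh))
          (mem_Ct p q a j) (heq ▸ mem_Ct p q a j') P ?_
        · have hD : (List.range (N + 1)).reverse.flatMap (fun t => (Ct p q a t).filter P)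
              = (Ct p q a (a j)).filter P := by
            apply flatMap_revrange_one _ N (a j) (haN j)
            intro u _ h1
            exact hCnil u h1 (by omega)
          rw [hw0, hD]
          rcases hpair with hh | hh <;> rw [hh]
          · exact iff_of_true (hKK j j' hne)
              (goalChain _ _ (fun h2 => hne (Sum.inl_injective h2)))
          · exact iff_of_true (hKK j j' hne)
              (goalChain _ _ (fun h2 => hne (Sum.inl_injective h2).symm))
        · intro u hu
          rw [pred_iff]
      · have hCj : (Ct p q a (a j)).filter P = [Sum.inl j] := by
          apply filter_single _ (nodup_Ct p q a (a j)) _ (mem_Ct p q a j)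
          intro z hz
          rw [pred_iff]
          rcases List.mem_map.mp hz with ⟨u, hu, rfl⟩
          have h3 : a u = a j := by simpa using (List.mem_filter.mp hu).2
          constructor
          · rintro (h1 | h1)
            · exact h1
            · exact absurd (Sum.inl_injective h1 ▸ h3) (by omega)
          · exact fun h1 => Or.inl h1
        have hCj' : (Ct p q a (a j')).filter P = [Sum.inl j'] := by
          apply filter_single _ (nodup_Ct p q a (a j')) _ (mem_Ct p q a j')
          intro z hz
          rw [pred_iff]
          rcases List.mem_map.mp hz with ⟨u, hu, rfl⟩
          have h3 : a u = a j' := by simpa using (List.mem_filter.mp hu).2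
          constructor
          · rintro (h1 | h1)
            · exact absurd (Sum.inl_injective h1 ▸ h3) (by omega)
            · exact h1
          · exact fun h1 => Or.inr h1
        have hD : (List.range (N + 1)).reverse.flatMap (fun t => (Ct p q a t).filter P)
            = [Sum.inl j, Sum.inl j'] := by
          rw [flatMap_revrange_pair _ N (a j') (a j) hgt (haN j)
            (fun u _ h1 h2 => hCnil u h2 h1)]
          rw [hCj, hCj']
          rfl
        rw [hw0, hD]
        exact iff_of_true (hKK j j' hne)
          (goalChain _ _ (fun hh => hne (Sum.inl_injective hh)))
    · exact mixed j i'
    · rw [pred_comm, SimpleGraph.adj_comm]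
      exact mixed j' i
    · -- independent-independent
      have hne : i ≠ i' := fun hh => hxy (congrArg Sum.inr hh)
      set P : Fin p ⊕ Fin q → Bool := Pred (Sum.inr i) (Sum.inr i') with hPdef
      have hCnil : ∀ t, (Ct p q a t).filter P = [] := by
        intro t
        apply List.filter_eq_nil_iff.mpr
        intro z hz hPz
        rcases List.mem_map.mp hz with ⟨u, hu, rfl⟩
        rcases (pred_iff _ _ _).mp hPz with h1 | h1 <;> exact Sum.inl_ne_inr h1
      have hInil : ∀ t, t ≠ b i → t ≠ b i' → (It p q b t).filter P = [] := by
        intro t ht ht'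
        apply List.filter_eq_nil_iff.mpr
        intro z hz hPz
        rcases List.mem_map.mp hz with ⟨u, hu, rfl⟩
        have h3 : b u = t := by simpa using (List.mem_filter.mp hu).2
        rcases (pred_iff _ _ _).mp hPz with h1 | h1
        · exact ht ((Sum.inr_injective h1 ▸ h3 : b i = t)).symm
        · exact ht' ((Sum.inr_injective h1 ▸ h3 : b i' = t)).symm
      have hDnil : (List.range (N + 1)).reverse.flatMap (fun t => (Ct p q a t).filter P) = [] :=
        List.flatMap_eq_nil_iff.mpr (fun t _ => hCnil t)
      have hw0 : (word p q a b N).filter P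
          = ((List.range (N + 1)).flatMap (fun t => (It p q b t).filter P))
            ++ ((List.range (N + 1)).reverse.flatMap
                  (fun t => ((It p q b t).filter P).reverse)) := by
        unfold word
        simp only [List.filter_append, List.filter_flatMap, List.filter_reverse]
        rw [hDnil]
        simp only [hCnil, List.nil_append, List.append_nil]
      have notChain : ∀ u v : Fin p ⊕ Fin q,
          ¬([u, v] ++ [v, u]).Chain' (· ≠ ·) := by
        intro u v hch
        simp [List.Chain', List.isChain_cons_cons] at hch
      rcases Nat.lt_trichotomy (b i) (b i') with hlt | heq | hgt
      · have hIi : (It p q b (b i)).filter P = [Sum.inr i] := by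
          apply filter_single _ (nodup_It p q b (b i)) _ (mem_It p q b i)
          intro z hz
          rw [pred_iff]
          rcases List.mem_map.mp hz with ⟨u, hu, rfl⟩
          have h3 : b u = b i := by simpa using (List.mem_filter.mp hu).2
          constructor
          · rintro (h1 | h1)
            · exact h1
            · exact absurd (Sum.inr_injective h1 ▸ h3) (by omega)
          · exact fun h1 => Or.inl h1
        have hIi' : (It p q b (b i')).filter P = [Sum.inr i'] := by
          apply filter_single _ (nodup_It p q b (b i')) _ (mem_It p q b i')
          intro z hz
          rw [pred_iff]
          rcases List.mem_map.mp hz with ⟨u, hu, rfl⟩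
          have h3 : b u = b i' := by simpa using (List.mem_filter.mp hu).2
          constructor
          · rintro (h1 | h1)
            · exact absurd (Sum.inr_injective h1 ▸ h3) (by omega)
            · exact h1
          · exact fun h1 => Or.inr h1
        have hSv : (List.range (N + 1)).flatMap (fun t => (It p q b t).filter P)
            = [Sum.inr i, Sum.inr i'] := by
          rw [flatMap_range_pair _ N (b i) (b i') hlt (hbN i')
            (fun u _ h1 h2 => hInil u h1 h2)]
          rw [hIi, hIi']
          rfl
        have hFv : (List.range (N + 1)).reverse.flatMap
            (fun t => ((It p q b t).filter P).reverse) = [Sum.inr i', Sum.inr i] := by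
          rw [flatMap_revrange_pair _ N (b i) (b i') hlt (hbN i')
            (fun u _ h1 h2 => by rw [hInil u h1 h2]; rfl)]
          rw [hIi, hIi']
          rfl
        rw [hw0, hSv, hFv]
        exact iff_of_false (hII i i') (notChain _ _)
      · have hpair := filter_pair (It p q b (b i)) (nodup_It p q b (b i))
          (Sum.inr i) (Sum.inr i' : Fin p ⊕ Fin q)
          (fun hh => hne (Sum.inr_injective hh))
          (mem_It p q b i) (heq ▸ mem_It p q b i') P ?_
        · have hSv : (List.range (N + 1)).flatMap (fun t => (It p q b t).filter P)
              = (It p q b (b i)).filter P := by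
            apply flatMap_range_one _ N (b i) (hbN i)
            intro u _ h1
            exact hInil u h1 (by omega)
          have hFv : (List.range (N + 1)).reverse.flatMap
              (fun t => ((It p q b t).filter P).reverse)
              = ((It p q b (b i)).filter P).reverse := by
            apply flatMap_revrange_one _ N (b i) (hbN i)
            intro u _ h1
            rw [hInil u h1 (by omega)]
            rfl
          rw [hw0, hSv, hFv]
          rcases hpair with hh | hh <;> rw [hh]
          · exact iff_of_false (hII i i') (notChain _ _)
          · exact iff_of_false (hII i i') (notChain _ _)
        · intro u hu
          rw [pred_iff]
      · have hIi : (It p q b (b i)).filter P = [Sum.inr i] := by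
          apply filter_single _ (nodup_It p q b (b i)) _ (mem_It p q b i)
          intro z hz
          rw [pred_iff]
          rcases List.mem_map.mp hz with ⟨u, hu, rfl⟩
          have h3 : b u = b i := by simpa using (List.mem_filter.mp hu).2
          constructor
          · rintro (h1 | h1)
            · exact h1
            · exact absurd (Sum.inr_injective h1 ▸ h3) (by omega)
          · exact fun h1 => Or.inl h1
        have hIi' : (It p q b (b i')).filter P = [Sum.inr i'] := by
          apply filter_single _ (nodup_It p q b (b i')) _ (mem_It p q b i')
          intro z hz
          rw [pred_iff]
          rcases List.mem_map.mp hz with ⟨u, hu, rfl⟩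
          have h3 : b u = b i' := by simpa using (List.mem_filter.mp hu).2
          constructor
          · rintro (h1 | h1)
            · exact absurd (Sum.inr_injective h1 ▸ h3) (by omega)
            · exact h1
          · exact fun h1 => Or.inr h1
        have hSv : (List.range (N + 1)).flatMap (fun t => (It p q b t).filter P)
            = [Sum.inr i', Sum.inr i] := by
          rw [flatMap_range_pair _ N (b i') (b i) hgt (hbN i)
            (fun u _ h1 h2 => hInil u h2 h1)]
          rw [hIi, hIi']
          rfl
        have hFv : (List.range (N + 1)).reverse.flatMap
            (fun t => ((It p q b t).filter P).reverse) = [Sum.inr i, Sum.inr i'] := by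
          rw [flatMap_revrange_pair _ N (b i') (b i) hgt (hbN i)
            (fun u _ h1 h2 => by rw [hInil u h2 h1]; rfl)]
          rw [hIi, hIi']
          rfl
        rw [hw0, hSv, hFv]
        exact iff_of_false (hII i i') (notChain _ _)

end Stmt14Aux

namespace Stmt14Aux

lemma rep_split {p q : ℕ} (M : Fin q → Fin p → Bool)
    (h : ∀ i i' : Fin q,
      (∀ j, M i j = true → M i' j = true) ∨ (∀ j, M i' j = true → M i j = true)) :
    WordRepresentable (splitGraph M) := by
  classical
  have key : ∀ (i : Fin q) (j : Fin p), M i j = true ↔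
      (Finset.univ.filter (fun i' => ∀ j', M i j' = true → M i' j' = true)).card ≤
        (Finset.univ.filter (fun i'' => M i'' j = true)).card := by
    intro i j
    constructor
    · intro hij
      apply Finset.card_le_card
      intro i' hi'
      rw [Finset.mem_filter] at hi' ⊢
      exact ⟨Finset.mem_univ _, hi'.2 j hij⟩
    · intro hle
      by_contra hij
      have hmem : i ∈ Finset.univ.filter (fun i' => ∀ j', M i j' = true → M i' j' = true) :=
        Finset.mem_filter.mpr ⟨Finset.mem_univ _, fun _ h' => h'⟩
      have hsub : Finset.univ.filter (fun i'' => M i'' j = true)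
          ⊆ (Finset.univ.filter (fun i' => ∀ j', M i j' = true → M i' j' = true)).erase i := by
        intro i' hi'
        rw [Finset.mem_filter] at hi'
        refine Finset.mem_erase.mpr ⟨?_, ?_⟩
        · rintro rfl
          exact hij hi'.2
        · rcases h i i' with hle' | hge'
          · exact Finset.mem_filter.mpr ⟨Finset.mem_univ _, hle'⟩
          · exact absurd (hge' j hi'.2) hij
      have h1 := Finset.card_le_card hsub
      rw [Finset.card_erase_of_mem hmem] at h1
      have h2 : 0 < (Finset.univ.filter
          (fun i' => ∀ j', M i j' = true → M i' j' = true)).card :=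
        Finset.card_pos.mpr ⟨i, hmem⟩
      omega
  apply rep_threshold
    (fun j => (Finset.univ.filter (fun i'' => M i'' j = true)).card)
    (fun i => (Finset.univ.filter (fun i' => ∀ j', M i j' = true → M i' j' = true)).card)
  · intro j j' hne
    refine (SimpleGraph.fromRel_adj _ _ _).mpr ⟨?_, Or.inl trivial⟩
    simp [hne]
  · intro i i' hadj
    rcases (SimpleGraph.fromRel_adj _ _ _).mp hadj with ⟨_, h1 | h1⟩ <;> exact h1
  · intro j i
    rw [← key i j]
    constructor
    · intro hadj
      rcases (SimpleGraph.fromRel_adj _ _ _).mp hadj with ⟨_, h1 | h1⟩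
      · exact h1
      · exact h1.elim
    · intro hij
      exact (SimpleGraph.fromRel_adj _ _ _).mpr ⟨by simp, Or.inl hij⟩

end Stmt14Aux


theorem stmt14 {m n : ℕ} (A B : Fin m → Fin n → Bool) (k : ℕ) (hk : 1 < k)
    (h : ∀ i i' : Fin (m ^ k),
      (∀ j, morphIter A B k i j = true → morphIter A B k i' j = true) ∨
      (∀ j, morphIter A B k i' j = true → morphIter A B k i j = true)) :
    WordRepresentable (Gk A B k) :=
  Stmt14Aux.rep_split (morphIter A B k) h
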